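/- (Theorem 2.) Let Y ∈ ℝ^{p×n} and S ∈ ℝ^{q×n}, let D = I_n − (1/n)·1_n 1_nᵀ, Ỹ = Y D, S̃ = S D, and let λ ∈ [0,1]. For each integer r ≥ 1 and Z ∈ ℝ^{r×n}, let J_y(Z) be the infimum over W ∈ ℝ^{p×r}, b ∈ ℝ^p of (1/n)Σ_{k=1}^n ‖W z_k + b − y_k‖², and define J_s(Z) analogously with S in place of Y; define L(r) = inf over Z ∈ ℝ^{r×n} of (1−λ)·J_y(Z) − λ·J_s(Z). Let B = λ·S̃ᵀS̃ − (1−λ)·ỸᵀỸ and let n⁻ be the number of negative eigenvalues of B counted with multiplicity. Then L(r) = L(n⁻) for every r ≥ n⁻, and L(r) > L(n⁻) for every 1 ≤ r < n⁻; in particular, n⁻ is the smallest embedding dimensionality r achieving the minimum of L over all r. -/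

import Mathlib

open Matrix

/-- Minimum MSE of a linear regressor (with bias) predicting the columns of
`S ∈ ℝ^{q×n}` from those of the embedding `Z ∈ ℝ^{r×n}`. -/
noncomputable def Jmse {q n : ℕ} (r : ℕ) (S : Matrix (Fin q) (Fin n) ℝ)
    (Z : Matrix (Fin r) (Fin n) ℝ) : ℝ :=
  ⨅ W : Matrix (Fin q) (Fin r) ℝ, ⨅ b : Fin q → ℝ,
    (n : ℝ)⁻¹ * ∑ k, ∑ j, (W.mulVec (fun i => Z i k) j + b j - S j k) ^ 2

/-- Optimal value of the Lagrangian ARL objective at embedding dimensionality `r`,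
the embedding being a free matrix `Z ∈ ℝ^{r×n}`. -/
noncomputable def arlOpt {p q n : ℕ} (Y : Matrix (Fin p) (Fin n) ℝ)
    (S : Matrix (Fin q) (Fin n) ℝ) (lam : ℝ) (r : ℕ) : ℝ :=
  ⨅ Z : Matrix (Fin r) (Fin n) ℝ, ((1 - lam) * Jmse r Y Z - lam * Jmse r S Z)

noncomputable section ARLaux

def Dm (n : ℕ) : Matrix (Fin n) (Fin n) ℝ := 1 - (n:ℝ)⁻¹ • Matrix.of (fun _ _ => (1:ℝ))

def fro {a b : ℕ} (M : Matrix (Fin a) (Fin b) ℝ) : ℝ := ∑ j, ∑ k, (M j k)^2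

lemma fro_nonneg {a b : ℕ} (M : Matrix (Fin a) (Fin b) ℝ) : 0 ≤ fro M := by
  apply Finset.sum_nonneg; intro j _; apply Finset.sum_nonneg; intro k _; positivity

lemma fro_eq_trace {a b : ℕ} (M : Matrix (Fin a) (Fin b) ℝ) : fro M = (M * Mᵀ).trace := by
  simp [fro, Matrix.trace, Matrix.mul_apply, Matrix.diag, sq]

lemma fro_neg {a b : ℕ} (M : Matrix (Fin a) (Fin b) ℝ) : fro (-M) = fro M := by
  simp [fro]

lemma pythag {a n : ℕ} (M : Matrix (Fin a) (Fin n) ℝ) (P : Matrix (Fin n) (Fin n) ℝ)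
    (hP : Pᵀ = P) (hPP : P * P = P) :
    fro (M * P) + fro (M * (1 - P)) = fro M := by
  have hQ : (1-P)ᵀ = 1 - P := by rw [Matrix.transpose_sub, Matrix.transpose_one, hP]
  have hQQ : (1-P) * (1-P) = 1 - P := by
    rw [Matrix.sub_mul, Matrix.mul_sub, Matrix.mul_sub, hPP, Matrix.one_mul, Matrix.mul_one]
    abel_nf
    rw [Matrix.one_mul]
  rw [fro_eq_trace, fro_eq_trace, fro_eq_trace]
  have h1 : (M * P) * (M * P)ᵀ = M * P * Mᵀ := by
    rw [Matrix.transpose_mul, hP, ← Matrix.mul_assoc, Matrix.mul_assoc M P P, hPP]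
  have h2 : (M * (1-P)) * (M * (1-P))ᵀ = M * (1-P) * Mᵀ := by
    rw [Matrix.transpose_mul, hQ, ← Matrix.mul_assoc, Matrix.mul_assoc M (1-P) (1-P), hQQ]
  rw [h1, h2, ← Matrix.trace_add]
  congr 1
  rw [Matrix.mul_sub, Matrix.mul_one, Matrix.sub_mul]
  abel

lemma fro_mul_proj_le {a n : ℕ} (M : Matrix (Fin a) (Fin n) ℝ) (P : Matrix (Fin n) (Fin n) ℝ)
    (hP : Pᵀ = P) (hPP : P * P = P) : fro (M * P) ≤ fro M := by
  have := pythag M P hP hPP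
  have := fro_nonneg (M * (1 - P))
  linarith

lemma fro_proj_pythag {a n : ℕ} (M : Matrix (Fin a) (Fin n) ℝ) (P : Matrix (Fin n) (Fin n) ℝ)
    (hP : Pᵀ = P) (hPP : P * P = P) : fro (M * P - M) = fro M - fro (M * P) := by
  have h := pythag M P hP hPP
  have : M * P - M = -(M * (1 - P)) := by rw [Matrix.mul_sub, Matrix.mul_one]; abel
  rw [this, fro_neg]
  linarith

lemma Dm_symm (n : ℕ) : (Dm n)ᵀ = Dm n := by
  simp only [Dm, Matrix.transpose_sub, Matrix.transpose_one, Matrix.transpose_smul]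
  congr 1

lemma Dm_idem {n : ℕ} (hn : 0 < n) : Dm n * Dm n = Dm n := by
  have hn' : (n:ℝ) ≠ 0 := Nat.cast_ne_zero.2 hn.ne'
  have hJ : (Matrix.of (fun _ _ => (1:ℝ)) : Matrix (Fin n) (Fin n) ℝ) *
      Matrix.of (fun _ _ => (1:ℝ)) = (n:ℝ) • Matrix.of (fun _ _ => (1:ℝ)) := by
    ext i j; simp [Matrix.mul_apply]
  simp only [Dm, Matrix.sub_mul, Matrix.mul_sub, Matrix.one_mul, Matrix.mul_one,
    Matrix.smul_mul, Matrix.mul_smul, hJ, smul_smul]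
  rw [inv_mul_cancel₀ hn', one_smul]
  abel_nf
  simp

lemma jmse_nonneg {q n r : ℕ} (S : Matrix (Fin q) (Fin n) ℝ) (Z : Matrix (Fin r) (Fin n) ℝ) :
    0 ≤ Jmse r S Z :=
  Real.iInf_nonneg fun W => Real.iInf_nonneg fun b => by positivity

lemma mse_eq_fro {q n r : ℕ} (S : Matrix (Fin q) (Fin n) ℝ) (Z : Matrix (Fin r) (Fin n) ℝ)
    (W : Matrix (Fin q) (Fin r) ℝ) (b : Fin q → ℝ) :
    ∑ k, ∑ j, (W.mulVec (fun i => Z i k) j + b j - S j k) ^ 2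
      = fro (W * Z + Matrix.of (fun j (_ : Fin n) => b j) - S) := by
  rw [fro, Finset.sum_comm]
  refine Finset.sum_congr rfl fun j _ => Finset.sum_congr rfl fun k _ => ?_
  simp [Matrix.mulVec, dotProduct, Matrix.mul_apply]

lemma colsum_Dm {n : ℕ} (hn : 0 < n) (k : Fin n) : ∑ m, Dm n m k = 0 := by
  have hn' : (n:ℝ) ≠ 0 := Nat.cast_ne_zero.2 hn.ne'
  simp [Dm, Matrix.sub_apply, Matrix.one_apply, Finset.sum_sub_distrib,
    Finset.sum_ite_eq, hn']

lemma bmat_mul_Dm {q n : ℕ} (hn : 0 < n) (b : Fin q → ℝ) :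
    (Matrix.of (fun j (_ : Fin n) => b j)) * Dm n = 0 := by
  ext j k
  simp only [Matrix.mul_apply, Matrix.of_apply, Matrix.zero_apply, ← Finset.mul_sum]
  rw [colsum_Dm hn k, mul_zero]

lemma jmse_le {q n r : ℕ} (hn : 0 < n) (S : Matrix (Fin q) (Fin n) ℝ)
    (Z : Matrix (Fin r) (Fin n) ℝ) (W : Matrix (Fin q) (Fin r) ℝ) :
    Jmse r S Z ≤ (n:ℝ)⁻¹ * fro (W * (Z * Dm n) - S * Dm n) := by
  have hn0 : (0:ℝ) ≤ (n:ℝ)⁻¹ := by positivity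
  set b : Fin q → ℝ := fun j => (n:ℝ)⁻¹ * ∑ k, (S j k - (W * Z) j k) with hbdef
  have key : W * Z + Matrix.of (fun j (_ : Fin n) => b j) - S
      = W * (Z * Dm n) - S * Dm n := by
    rw [← Matrix.mul_assoc, ← Matrix.sub_mul]
    ext j k
    have hn' : (n:ℝ) ≠ 0 := Nat.cast_ne_zero.2 hn.ne'
    simp only [Matrix.sub_apply, Matrix.add_apply, Matrix.of_apply, Matrix.mul_apply,
      Dm, Matrix.sub_apply, Matrix.one_apply, Matrix.smul_apply, Matrix.of_apply,
      smul_eq_mul, hbdef]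
    rw [mul_one]
    simp only [mul_sub, sub_mul, mul_ite, ite_mul, mul_one, mul_zero, one_mul, zero_mul,
      Finset.sum_sub_distrib, Finset.sum_ite_eq' Finset.univ k, Finset.mem_univ, if_true,
      Finset.mul_sum, Finset.sum_mul]
    simp only [← Finset.mul_sum, ← Finset.sum_mul]
    ring
  have h1 : Jmse r S Z ≤ ⨅ b' : Fin q → ℝ,
      (n : ℝ)⁻¹ * ∑ k, ∑ j, (W.mulVec (fun i => Z i k) j + b' j - S j k) ^ 2 := by
    apply ciInf_le
    refine ⟨0, ?_⟩
    rintro x ⟨W', rfl⟩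
    exact Real.iInf_nonneg fun b' => by positivity
  have h2 : (⨅ b' : Fin q → ℝ,
      (n : ℝ)⁻¹ * ∑ k, ∑ j, (W.mulVec (fun i => Z i k) j + b' j - S j k) ^ 2)
      ≤ (n : ℝ)⁻¹ * ∑ k, ∑ j, (W.mulVec (fun i => Z i k) j + b j - S j k) ^ 2 := by
    apply ciInf_le
    refine ⟨0, ?_⟩
    rintro x ⟨b', rfl⟩
    positivity
  refine (h1.trans h2).trans ?_
  rw [mse_eq_fro, key]

lemma jmse_ge {q n r : ℕ} (hn : 0 < n) (S : Matrix (Fin q) (Fin n) ℝ)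
    (Z : Matrix (Fin r) (Fin n) ℝ) (P : Matrix (Fin n) (Fin n) ℝ)
    (hP : Pᵀ = P) (hPP : P * P = P) (hZP : Z * Dm n * P = Z * Dm n) :
    (n:ℝ)⁻¹ * (fro (S * Dm n) - fro (S * Dm n * P)) ≤ Jmse r S Z := by
  have hn0 : (0:ℝ) ≤ (n:ℝ)⁻¹ := by positivity
  apply le_ciInf; intro W
  apply le_ciInf; intro b
  rw [mse_eq_fro]
  set A := W * Z + Matrix.of (fun j (_ : Fin n) => b j) - S with hA
  have hAD : A * Dm n = W * (Z * Dm n) - S * Dm n := by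
    rw [hA, Matrix.sub_mul, Matrix.add_mul, bmat_mul_Dm hn, add_zero, Matrix.mul_assoc]
  have step1 : fro (A * Dm n) ≤ fro A := fro_mul_proj_le A _ (Dm_symm n) (Dm_idem hn)
  set M := W * (Z * Dm n) - S * Dm n with hM
  have hMP : M * (1 - P) = -(S * Dm n * (1 - P)) := by
    have hMPP : M * P = W * (Z * Dm n) - S * Dm n * P := by
      rw [hM, Matrix.sub_mul, Matrix.mul_assoc W, hZP]
    rw [Matrix.mul_sub, Matrix.mul_one, hMPP, hM, Matrix.mul_sub, Matrix.mul_one]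
    abel
  have step2 : fro (S * Dm n) - fro (S * Dm n * P) ≤ fro M := by
    have p1 := pythag M P hP hPP
    have p2 := pythag (S * Dm n) P hP hPP
    have := fro_nonneg (M * P)
    rw [hMP, fro_neg] at p1
    linarith
  have : fro (S * Dm n) - fro (S * Dm n * P) ≤ fro A := by
    rw [← hAD] at step2; exact step2.trans step1
  exact mul_le_mul_of_nonneg_left this hn0

lemma mu_char {n : ℕ} (μ : Fin n → ℝ) (hμ : Monotone μ) (nneg : ℕ)
    (h : nneg = (Finset.univ.filter fun i : Fin n => μ i < 0).card) (i : Fin n) :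
    μ i < 0 ↔ (i : ℕ) < nneg := by
  constructor
  · intro hi
    have hsub : Finset.Iic i ⊆ Finset.univ.filter fun j : Fin n => μ j < 0 := by
      intro j hj
      simp only [Finset.mem_Iic] at hj
      simp only [Finset.mem_filter, Finset.mem_univ, true_and]
      exact lt_of_le_of_lt (hμ hj) hi
    have := Finset.card_le_card hsub
    rw [Fin.card_Iic] at this
    omega
  · intro hi
    by_contra hneg
    push_neg at hneg
    have hsub : (Finset.univ.filter fun j : Fin n => μ j < 0) ⊆ Finset.Iio i := by
      intro j hj
      simp only [Finset.mem_filter, Finset.mem_univ, true_and] at hj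
      simp only [Finset.mem_Iio]
      by_contra hji
      push_neg at hji
      exact absurd (lt_of_le_of_lt (le_trans hneg (hμ hji)) hj) (lt_irrefl 0)
    have := Finset.card_le_card hsub
    rw [Fin.card_Iio] at this
    omega

lemma nneg_le_n {n : ℕ} (μ : Fin n → ℝ) (nneg : ℕ)
    (h : nneg = (Finset.univ.filter fun i : Fin n => μ i < 0).card) : nneg ≤ n := by
  rw [h]
  calc (Finset.univ.filter fun i : Fin n => μ i < 0).card ≤ (Finset.univ : Finset (Fin n)).card :=
    Finset.card_le_card (Finset.filter_subset _ _)
  _ = n := by simp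

lemma card_filter_lt {n r : ℕ} (hrn : r ≤ n) :
    (Finset.univ.filter fun i : Fin n => (i : ℕ) < r).card = r := by
  rcases Nat.eq_or_lt_of_le hrn with h | h
  · subst h
    rw [Finset.filter_true_of_mem (fun i _ => i.2)]
    simp
  · have : (Finset.univ.filter fun i : Fin n => (i : ℕ) < r) = Finset.Iio ⟨r, h⟩ := by
      ext j; simp [Fin.lt_def]
    rw [this, Fin.card_Iio]

lemma key_ineq {n : ℕ} (μ : Fin n → ℝ) (hμ : Monotone μ) (nneg r : ℕ) (hnn : nneg ≤ n)
    (hchar : ∀ i : Fin n, μ i < 0 ↔ (i : ℕ) < nneg) (t : Fin n → ℝ)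
    (ht0 : ∀ i, 0 ≤ t i) (ht1 : ∀ i, t i ≤ 1) (hts : ∑ i, t i ≤ (r : ℝ)) :
    ∑ i ∈ Finset.univ.filter (fun i : Fin n => (i : ℕ) < min r nneg), μ i
      ≤ ∑ i, μ i * t i := by
  rcases le_or_gt nneg r with hr | hr
  · rw [min_eq_right hr]
    have step1 : ∑ i ∈ Finset.univ.filter (fun i : Fin n => (i : ℕ) < nneg), μ i
        ≤ ∑ i ∈ Finset.univ.filter (fun i : Fin n => (i : ℕ) < nneg), μ i * t i := by
      apply Finset.sum_le_sum
      intro i hi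
      simp only [Finset.mem_filter, Finset.mem_univ, true_and] at hi
      have hμi : μ i < 0 := (hchar i).2 hi
      nlinarith [ht0 i, ht1 i]
    refine step1.trans ?_
    apply Finset.sum_le_sum_of_subset_of_nonneg (Finset.filter_subset _ _)
    intro i _ hi
    simp only [Finset.mem_filter, Finset.mem_univ, true_and] at hi
    have : 0 ≤ μ i := by
      by_contra hc; push_neg at hc; exact hi ((hchar i).1 hc)
    exact mul_nonneg this (ht0 i)
  · rw [min_eq_left hr.le]
    have hrn : r < n := lt_of_lt_of_le hr hnn
    set m := μ ⟨r, hrn⟩ with hm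
    have hmneg : m < 0 := (hchar _).2 (by simpa using hr)
    set F := Finset.univ.filter (fun i : Fin n => (i : ℕ) < r) with hF
    have hcard : F.card = r := card_filter_lt hrn.le
    have h1 : ∑ i ∈ F, (μ i - m) ≤ ∑ i ∈ F, (μ i - m) * t i := by
      apply Finset.sum_le_sum
      intro i hi
      simp only [hF, Finset.mem_filter, Finset.mem_univ, true_and] at hi
      have : μ i ≤ m := hμ (by simp [Fin.le_def]; omega)
      nlinarith [ht1 i]
    have h2 : ∑ i ∈ F, (μ i - m) * t i ≤ ∑ i, (μ i - m) * t i := by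
      apply Finset.sum_le_sum_of_subset_of_nonneg (Finset.filter_subset _ _)
      intro i _ hi
      simp only [hF, Finset.mem_filter, Finset.mem_univ, true_and] at hi
      have : m ≤ μ i := hμ (by simp [Fin.le_def]; omega)
      exact mul_nonneg (by linarith) (ht0 i)
    have hexp1 : ∑ i ∈ F, (μ i - m) = (∑ i ∈ F, μ i) - (r : ℝ) * m := by
      rw [Finset.sum_sub_distrib, Finset.sum_const, hcard, nsmul_eq_mul]
    have hexp2 : ∑ i, (μ i - m) * t i = (∑ i, μ i * t i) - m * ∑ i, t i := by
      rw [Finset.mul_sum, ← Finset.sum_sub_distrib]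
      exact Finset.sum_congr rfl fun i _ => by ring
    rw [hexp1] at h1
    rw [hexp2] at h2
    have hprod : 0 ≤ (-m) * ((r : ℝ) - ∑ i, t i) :=
      mul_nonneg (by linarith) (by linarith)
    nlinarith

lemma exists_proj {r n : ℕ} (M : Matrix (Fin r) (Fin n) ℝ) :
    ∃ P : Matrix (Fin n) (Fin n) ℝ, Pᵀ = P ∧ P * P = P ∧ P.trace ≤ (r : ℝ) ∧ M * P = M ∧
      ∀ (q : ℕ) (T : Matrix (Fin q) (Fin n) ℝ), ∃ W : Matrix (Fin q) (Fin r) ℝ,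
        W * M = T * P := by
  classical
  set E := EuclideanSpace ℝ (Fin n) with hE
  let L := WithLp.linearEquiv 2 ℝ (Fin n → ℝ)
  let v : Fin r → E := fun i => L.symm (M i)
  let V : Submodule ℝ E := Submodule.span ℝ (Set.range v)
  let d := Module.finrank ℝ V
  have hd : d ≤ r := by
    have h1 : Module.finrank ℝ V ≤ (Set.range v).toFinset.card := finrank_span_le_card _
    have h2 : (Set.range v).toFinset.card ≤ r := by
      rw [Set.toFinset_range]
      exact (Finset.card_image_le).trans (by simp)
    exact h1.trans h2
  let b := stdOrthonormalBasis ℝ V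
  let g : Fin d → E := fun i => (b i : E)
  have hinner : ∀ x y : E, inner ℝ x y = ∑ k, L x k * L y k := by
    intro x y
    simp [PiLp.inner_apply, RCLike.inner_apply, L]
    rw [PiLp.inner_apply]
    exact Finset.sum_congr rfl fun k _ => by simp [mul_comm]
  have horth : ∀ i j, inner ℝ (g i) (g j) = if i = j then 1 else 0 := by
    intro i j
    have := orthonormal_iff_ite.mp b.orthonormal i j
    simpa [g, Submodule.coe_inner] using this
  let Q : Matrix (Fin d) (Fin n) ℝ := Matrix.of fun i k => L (g i) k
  have hQQ : Q * Qᵀ = 1 := by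
    ext i j
    simp only [Matrix.mul_apply, Matrix.transpose_apply, Matrix.of_apply, Q, Matrix.one_apply]
    rw [← hinner (g i) (g j), horth i j]
  set P := Qᵀ * Q with hPdef
  have hP : Pᵀ = P := by
    rw [hPdef, Matrix.transpose_mul, Matrix.transpose_transpose]
  have hPP : P * P = P := by
    rw [hPdef, Matrix.mul_assoc, ← Matrix.mul_assoc Q Qᵀ Q, hQQ, Matrix.one_mul]
  have htr : P.trace ≤ (r : ℝ) := by
    rw [hPdef, Matrix.trace_mul_comm, hQQ, Matrix.trace_one]
    rw [Fintype.card_fin]; exact_mod_cast hd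
  have hfixg : ∀ j, (L (g j)) ᵥ* P = L (g j) := by
    intro j
    rw [hPdef, ← Matrix.vecMul_vecMul]
    have h1 : (L (g j)) ᵥ* Qᵀ = fun i => if j = i then 1 else 0 := by
      funext i
      simp only [Matrix.vecMul, dotProduct, Matrix.transpose_apply, Matrix.of_apply, Q]
      rw [← hinner (g j) (g i), horth j i]
    rw [h1]
    funext k
    simp [Matrix.vecMul, dotProduct, Finset.sum_ite_eq, Q]
  have hrepr : ∀ x : E, x ∈ V → ∃ c : Fin d → ℝ, x = ∑ j, c j • g j := by
    intro x hx
    refine ⟨fun j => b.repr ⟨x, hx⟩ j, ?_⟩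
    have h := b.sum_repr ⟨x, hx⟩
    have := congrArg (Submodule.subtype V) h
    simp only [map_sum, _root_.map_smul, Submodule.coe_subtype] at this
    exact this.symm
  have hfix : ∀ x : E, x ∈ V → (L x) ᵥ* P = L x := by
    intro x hx
    obtain ⟨c, rfl⟩ := hrepr x hx
    rw [map_sum, ← Matrix.vecMulLinear_apply, map_sum]
    refine Finset.sum_congr rfl fun j _ => ?_
    rw [_root_.map_smul L, _root_.map_smul (Matrix.vecMulLinear P), Matrix.vecMulLinear_apply,
      hfixg j]
  have hvV : ∀ i, v i ∈ V := fun i => Submodule.subset_span (Set.mem_range_self i)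
  have hMP : M * P = M := by
    ext i k
    have h := hfix (v i) (hvV i)
    have hLv : L (v i) = M i := by simp [v, L]
    rw [hLv] at h
    have := congrFun h k
    simpa [Matrix.vecMul, dotProduct, Matrix.mul_apply] using this
  refine ⟨P, hP, hPP, htr, hMP, ?_⟩
  intro q T
  have hrow : ∀ j, ∃ c : Fin r → ℝ, ∑ i, c i • v i = L.symm ((T j) ᵥ* P) := by
    intro j
    rw [← Submodule.mem_span_range_iff_exists_fun]
    show L.symm ((T j) ᵥ* P) ∈ V
    have h1 : (T j) ᵥ* P = ((T j) ᵥ* Qᵀ) ᵥ* Q := by rw [Matrix.vecMul_vecMul, hPdef]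
    rw [h1]
    have h2 : ((T j) ᵥ* Qᵀ) ᵥ* Q = L (∑ i, ((T j) ᵥ* Qᵀ) i • g i) := by
      rw [map_sum]
      funext k
      simp only [Matrix.vecMul, dotProduct, Matrix.of_apply, Q]
      simp [Finset.sum_apply, L]
    rw [h2, LinearEquiv.symm_apply_apply]
    exact Submodule.sum_smul_mem V _ fun i _ => (b i).2
  choose c hc using hrow
  refine ⟨Matrix.of c, ?_⟩
  ext j k
  have := congrArg L (hc j)
  rw [LinearEquiv.apply_symm_apply, map_sum] at this
  have := congrFun this k
  simp only [Finset.sum_apply] at this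
  simp only [Matrix.mul_apply, Matrix.of_apply]
  have h2 : ((T j) ᵥ* P) k = ∑ j1, T j j1 * P j1 k := by
    simp [Matrix.vecMul, dotProduct]
  rw [← h2, ← this]
  exact Finset.sum_congr rfl fun i _ => by simp [v, L]

lemma fro_proj_trace {a n : ℕ} (M : Matrix (Fin a) (Fin n) ℝ) (P : Matrix (Fin n) (Fin n) ℝ)
    (hP : Pᵀ = P) (hPP : P * P = P) : fro (M * P) = (Mᵀ * M * P).trace := by
  rw [fro_eq_trace, Matrix.transpose_mul, hP]
  have h1 : M * P * (P * Mᵀ) = M * P * Mᵀ := by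
    rw [← Matrix.mul_assoc, Matrix.mul_assoc M P P, hPP]
  rw [h1, Matrix.trace_mul_cycle]

lemma diag_idem_nonneg {n : ℕ} (R : Matrix (Fin n) (Fin n) ℝ) (hR : Rᵀ = R)
    (hRR : R * R = R) (i : Fin n) : 0 ≤ R i i := by
  have h : R i i = ∑ k, (R i k)^2 := by
    conv_lhs => rw [← hRR]
    rw [Matrix.mul_apply]
    refine Finset.sum_congr rfl fun k _ => ?_
    have : R k i = R i k := by conv_lhs => rw [← hR, Matrix.transpose_apply]
    rw [this, sq]
  rw [h]
  exact Finset.sum_nonneg fun k _ => sq_nonneg _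

lemma diag_idem_le_one {n : ℕ} (R : Matrix (Fin n) (Fin n) ℝ) (hR : Rᵀ = R)
    (hRR : R * R = R) (i : Fin n) : R i i ≤ 1 := by
  have hQ : (1-R)ᵀ = 1 - R := by rw [Matrix.transpose_sub, Matrix.transpose_one, hR]
  have hQQ : (1-R) * (1-R) = 1 - R := by
    rw [Matrix.sub_mul, Matrix.mul_sub, Matrix.mul_sub, hRR, Matrix.one_mul, Matrix.mul_one]
    abel_nf
    rw [Matrix.one_mul]
  have := diag_idem_nonneg (1-R) hQ hQQ i
  simp only [Matrix.sub_apply, Matrix.one_apply_eq] at this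
  linarith

end ARLaux

section MainValue

open Matrix Finset

lemma rowsum_Dm {n : ℕ} (hn : 0 < n) (m : Fin n) : ∑ l, Dm n m l = 0 := by
  have hn' : (n:ℝ) ≠ 0 := Nat.cast_ne_zero.2 hn.ne'
  simp [Dm, Matrix.sub_apply, Matrix.one_apply, Finset.sum_sub_distrib,
    Finset.sum_ite_eq', hn']

lemma arl_value {n p q : ℕ} (hn : 0 < n)
    (Y : Matrix (Fin p) (Fin n) ℝ) (S : Matrix (Fin q) (Fin n) ℝ)
    (lam : ℝ) (hlam0 : 0 ≤ lam) (hlam1 : lam ≤ 1)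
    (Yt : Matrix (Fin p) (Fin n) ℝ) (St : Matrix (Fin q) (Fin n) ℝ)
    (hYt : Yt = Y * Dm n) (hSt : St = S * Dm n)
    (B : Matrix (Fin n) (Fin n) ℝ)
    (hB : B = lam • (Stᵀ * St) - (1 - lam) • (Ytᵀ * Yt))
    (μ : Fin n → ℝ) (hμ : Monotone μ)
    (U : Matrix (Fin n) (Fin n) ℝ) (hU : Uᵀ * U = 1)
    (hdiag : B = U * Matrix.diagonal μ * Uᵀ)
    (nneg : ℕ) (hnneg : nneg = (Finset.univ.filter fun i : Fin n => μ i < 0).card)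
    (r : ℕ) :
    arlOpt Y S lam r = (n:ℝ)⁻¹ * ((1-lam) * fro Yt - lam * fro St)
      + (n:ℝ)⁻¹ * ∑ i ∈ Finset.univ.filter (fun i : Fin n => (i:ℕ) < min r nneg), μ i := by
  classical
  have hninv : (0:ℝ) ≤ (n:ℝ)⁻¹ := by positivity
  have hUUT : U * Uᵀ = 1 := mul_eq_one_comm.mp hU
  have hchar : ∀ i : Fin n, μ i < 0 ↔ (i : ℕ) < nneg := mu_char μ hμ nneg hnneg
  have hnn : nneg ≤ n := nneg_le_n μ nneg hnneg
  set c : ℝ := (n:ℝ)⁻¹ * ((1-lam) * fro Yt - lam * fro St) with hc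
  set mrn : ℕ := min r nneg with hmrn
  have hmrn_r : mrn ≤ r := hmrn ▸ min_le_left r nneg
  have hmrn_nneg : mrn ≤ nneg := hmrn ▸ min_le_right r nneg
  have hmrn_n : mrn ≤ n := le_trans hmrn_nneg hnn
  set msum : ℝ := ∑ i ∈ Finset.univ.filter (fun i : Fin n => (i:ℕ) < mrn), μ i with hmsum
  -- objective-to-trace identity
  have hobj : ∀ Pm : Matrix (Fin n) (Fin n) ℝ, Pmᵀ = Pm → Pm * Pm = Pm →
      (1-lam) * ((n:ℝ)⁻¹ * (fro Yt - fro (Yt * Pm)))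
        - lam * ((n:ℝ)⁻¹ * (fro St - fro (St * Pm)))
      = c + (n:ℝ)⁻¹ * (B * Pm).trace := by
    intro Pm h1 h2
    have e1 : fro (Yt * Pm) = (Ytᵀ * Yt * Pm).trace := fro_proj_trace _ _ h1 h2
    have e2 : fro (St * Pm) = (Stᵀ * St * Pm).trace := fro_proj_trace _ _ h1 h2
    have e3 : (B * Pm).trace
        = lam * (Stᵀ * St * Pm).trace - (1-lam) * (Ytᵀ * Yt * Pm).trace := by
      rw [hB, Matrix.sub_mul, Matrix.smul_mul, Matrix.smul_mul, Matrix.trace_sub,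
        Matrix.trace_smul, Matrix.trace_smul, smul_eq_mul, smul_eq_mul]
    rw [e1, e2, e3, hc]; ring
  -- trace lower bound for admissible projections
  have htr_ge : ∀ Pm : Matrix (Fin n) (Fin n) ℝ, Pmᵀ = Pm → Pm * Pm = Pm →
      Pm.trace ≤ (r:ℝ) → msum ≤ (B * Pm).trace := by
    intro Pm h1 h2 h3
    set R := Uᵀ * Pm * U with hR
    have hRsym : Rᵀ = R := by
      rw [hR, Matrix.transpose_mul, Matrix.transpose_mul, Matrix.transpose_transpose, h1,
        Matrix.mul_assoc]
    have hRR : R * R = R := by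
      have h4 : (Uᵀ * Pm * U) * (Uᵀ * Pm * U) = Uᵀ * (Pm * ((U * Uᵀ) * (Pm * U))) := by
        simp only [Matrix.mul_assoc]
      rw [hR, h4, hUUT, Matrix.one_mul, ← Matrix.mul_assoc, ← Matrix.mul_assoc,
        Matrix.mul_assoc Uᵀ Pm Pm, h2]
    have htrR : R.trace = Pm.trace := by
      rw [hR, Matrix.trace_mul_comm, ← Matrix.mul_assoc, hUUT, Matrix.one_mul]
    have ht0 : ∀ i, 0 ≤ R i i := diag_idem_nonneg R hRsym hRR
    have ht1 : ∀ i, R i i ≤ 1 := diag_idem_le_one R hRsym hRR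
    have hts : ∑ i, R i i ≤ (r:ℝ) := by
      have : ∑ i, R i i = R.trace := rfl
      rw [this, htrR]; exact h3
    have hBtr : (B * Pm).trace = ∑ i, μ i * R i i := by
      rw [hdiag]
      have h4 : U * Matrix.diagonal μ * Uᵀ * Pm = U * (Matrix.diagonal μ * (Uᵀ * Pm)) := by
        simp only [Matrix.mul_assoc]
      rw [h4, Matrix.trace_mul_comm U, Matrix.mul_assoc]
      simp only [hR]
      simp [Matrix.trace, Matrix.diag, Matrix.mul_apply, Matrix.diagonal_apply, ite_mul,
        zero_mul, Finset.sum_ite_eq, Matrix.mul_assoc]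
      refine Finset.sum_congr rfl fun x _ => ?_
      congr 1
      simp only [Finset.mul_sum, Finset.sum_mul]
      rw [Finset.sum_comm]
      exact Finset.sum_congr rfl fun a _ => Finset.sum_congr rfl fun b _ => by ring
    rw [hBtr]
    exact key_ineq μ hμ nneg r hnn hchar (fun i => R i i) ht0 ht1 hts
  -- lower bound for every Z
  have hlb : ∀ Z : Matrix (Fin r) (Fin n) ℝ,
      c + (n:ℝ)⁻¹ * msum ≤ (1-lam) * Jmse r Y Z - lam * Jmse r S Z := by
    intro Z
    obtain ⟨Pm, h1, h2, h3, h4, h5⟩ := exists_proj (Z * Dm n)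
    obtain ⟨W, hW⟩ := h5 q St
    have hy : (n:ℝ)⁻¹ * (fro Yt - fro (Yt * Pm)) ≤ Jmse r Y Z := by
      have := jmse_ge hn Y Z Pm h1 h2 h4
      rwa [← hYt] at this
    have hs : Jmse r S Z ≤ (n:ℝ)⁻¹ * (fro St - fro (St * Pm)) := by
      have h6 := jmse_le hn S Z W
      rw [hW, ← hSt, fro_proj_pythag St Pm h1 h2] at h6
      exact h6
    have c1 : (1-lam) * ((n:ℝ)⁻¹ * (fro Yt - fro (Yt * Pm))) ≤ (1-lam) * Jmse r Y Z :=
      mul_le_mul_of_nonneg_left hy (by linarith)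
    have c2 : lam * Jmse r S Z ≤ lam * ((n:ℝ)⁻¹ * (fro St - fro (St * Pm))) :=
      mul_le_mul_of_nonneg_left hs hlam0
    have c3 := hobj Pm h1 h2
    have c4 : (n:ℝ)⁻¹ * msum ≤ (n:ℝ)⁻¹ * (B * Pm).trace :=
      mul_le_mul_of_nonneg_left (htr_ge Pm h1 h2 h3) hninv
    linarith
  -- the special embedding
  have hidx : ∀ i : Fin r, (i:ℕ) < mrn → (i:ℕ) < n := fun i h =>
    lt_of_lt_of_le h hmrn_n
  set Zs : Matrix (Fin r) (Fin n) ℝ := Matrix.of fun i k =>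
    if h : (i:ℕ) < mrn then U k ⟨(i:ℕ), hidx i h⟩ else 0 with hZs
  have hUcol : ∀ a a' : Fin n, ∑ k, U k a * U k a' = if a = a' then 1 else 0 := by
    intro a a'
    have h := congrFun (congrFun hU a) a'
    simpa [Matrix.mul_apply, Matrix.transpose_apply, Matrix.one_apply] using h
  have hBU : B * U = U * Matrix.diagonal μ := by
    rw [hdiag, Matrix.mul_assoc (U * Matrix.diagonal μ) Uᵀ U, hU, Matrix.mul_one]
  have hBUentry : ∀ (m' : Fin n) (a : Fin n), ∑ l, B m' l * U l a = μ a * U m' a := by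
    intro m' a
    have h := congrFun (congrFun hBU m') a
    rw [Matrix.mul_apply, Matrix.mul_diagonal] at h
    exact h.trans (mul_comm _ _)
  have hBsym : Bᵀ = B := by
    rw [hB]
    simp [Matrix.transpose_sub, Matrix.transpose_smul, Matrix.transpose_mul,
      Matrix.transpose_transpose]
  have hStRow : ∀ k : Fin q, ∑ l, St k l = 0 := by
    intro k
    rw [hSt]
    have : ∀ m : Fin n, ∑ l, Dm n m l = 0 := fun m => rowsum_Dm hn m
    simp only [Matrix.mul_apply]
    rw [Finset.sum_comm]
    simp only [← Finset.mul_sum]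
    exact Finset.sum_eq_zero fun m _ => by rw [this m, mul_zero]
  have hYtRow : ∀ k : Fin p, ∑ l, Yt k l = 0 := by
    intro k
    rw [hYt]
    have : ∀ m : Fin n, ∑ l, Dm n m l = 0 := fun m => rowsum_Dm hn m
    simp only [Matrix.mul_apply]
    rw [Finset.sum_comm]
    simp only [← Finset.mul_sum]
    exact Finset.sum_eq_zero fun m _ => by rw [this m, mul_zero]
  have hBcolsum : ∀ m' : Fin n, ∑ l, B l m' = 0 := by
    intro m'
    rw [hB]
    simp only [Matrix.sub_apply, Matrix.smul_apply, smul_eq_mul, Finset.sum_sub_distrib,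
      ← Finset.mul_sum]
    have hSterm : ∑ l, (Stᵀ * St) l m' = 0 := by
      simp only [Matrix.mul_apply, Matrix.transpose_apply]
      rw [Finset.sum_comm]
      refine Finset.sum_eq_zero fun k _ => ?_
      rw [← Finset.sum_mul, hStRow k, zero_mul]
    have hYterm : ∑ l, (Ytᵀ * Yt) l m' = 0 := by
      simp only [Matrix.mul_apply, Matrix.transpose_apply]
      rw [Finset.sum_comm]
      refine Finset.sum_eq_zero fun k _ => ?_
      rw [← Finset.sum_mul, hYtRow k, zero_mul]
    rw [hSterm, hYterm]
    ring
  have hUcolsum : ∀ a : Fin n, μ a ≠ 0 → ∑ k, U k a = 0 := by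
    intro a ha
    have h1 : ∑ l, (B * U) l a = μ a * ∑ l, U l a := by
      have : ∀ l, (B * U) l a = μ a * U l a := by
        intro l
        have h := congrFun (congrFun hBU l) a
        rw [h, Matrix.mul_diagonal, mul_comm]
      rw [Finset.sum_congr rfl fun l _ => this l, ← Finset.mul_sum]
    have h2 : ∑ l, (B * U) l a = 0 := by
      simp only [Matrix.mul_apply]
      rw [Finset.sum_comm]
      refine Finset.sum_eq_zero fun m _ => ?_
      rw [← Finset.sum_mul, hBcolsum m, zero_mul]
    rw [h2] at h1
    exact (mul_eq_zero.mp h1.symm).resolve_left ha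
  have hZJ : Zs * (Matrix.of fun (_ : Fin n) (_ : Fin n) => (1:ℝ)) = 0 := by
    ext i k
    simp only [Matrix.mul_apply, Matrix.of_apply, mul_one, Matrix.zero_apply, hZs]
    by_cases h : (i:ℕ) < mrn
    · simp only [dif_pos h]
      refine hUcolsum ⟨(i:ℕ), hidx i h⟩ ?_
      have : μ ⟨(i:ℕ), hidx i h⟩ < 0 :=
        (hchar _).2 (lt_of_lt_of_le h hmrn_nneg)
      linarith
    · simp only [dif_neg h, Finset.sum_const_zero]
  have hZ1 : Zs * Dm n = Zs := by
    rw [show Dm n = 1 - (n:ℝ)⁻¹ • Matrix.of (fun _ _ => (1:ℝ)) from rfl, Matrix.mul_sub,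
      Matrix.mul_one, Matrix.mul_smul, hZJ, smul_zero, sub_zero]
  set e : Fin r → ℝ := fun i => if (i:ℕ) < mrn then 1 else 0 with he
  have hZZT : Zs * Zsᵀ = Matrix.diagonal e := by
    ext i i'
    simp only [Matrix.mul_apply, Matrix.transpose_apply, Matrix.diagonal_apply, hZs,
      Matrix.of_apply, he]
    by_cases hii : i = i'
    · subst hii
      by_cases h : (i:ℕ) < mrn
      · simp only [dif_pos h, if_pos rfl, if_pos h]
        have := hUcol ⟨(i:ℕ), hidx i h⟩ ⟨(i:ℕ), hidx i h⟩
        simpa using this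
      · simp [dif_neg h, h]
    · rw [if_neg hii]
      by_cases h : (i:ℕ) < mrn
      · by_cases h' : (i':ℕ) < mrn
        · simp only [dif_pos h, dif_pos h']
          have := hUcol ⟨(i:ℕ), hidx i h⟩ ⟨(i':ℕ), hidx i' h'⟩
          rw [this, if_neg]
          intro hcon
          apply hii
          exact Fin.ext (by simpa using congrArg Fin.val hcon)
        · simp [dif_neg h']
      · simp [dif_neg h]
  have hdiagZ : Matrix.diagonal e * Zs = Zs := by
    ext i k
    rw [Matrix.diagonal_mul]
    simp only [he, hZs, Matrix.of_apply]
    by_cases h : (i:ℕ) < mrn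
    · rw [if_pos h, one_mul]
    · rw [if_neg h, dif_neg h, mul_zero]
  set Ps := Zsᵀ * Zs with hPs
  have hPssym : Psᵀ = Ps := by
    rw [hPs, Matrix.transpose_mul, Matrix.transpose_transpose]
  have hPsP : Ps * Ps = Ps := by
    rw [hPs, Matrix.mul_assoc, ← Matrix.mul_assoc Zs Zsᵀ Zs, hZZT, hdiagZ]
  have hZPs : Zs * Ps = Zs := by
    rw [hPs, ← Matrix.mul_assoc, hZZT, hdiagZ]
  have hZDPs : Zs * Dm n * Ps = Zs * Dm n := by
    rw [hZ1, hZPs]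
  -- the trace at the special projection
  set ν : ℕ → ℝ := fun j => if h : j < n then μ ⟨j, h⟩ else 0 with hν
  have hgen : ∀ a : ℕ, mrn ≤ a →
      ∑ j ∈ Finset.range a, (if j < mrn then ν j else 0)
        = ∑ j ∈ Finset.range (mrn), ν j := by
    intro a ha
    rw [← Finset.sum_filter]
    congr 1
    ext j
    simp only [Finset.mem_filter, Finset.mem_range]
    omega
  have hdiagval : ∀ i : Fin r, (Zs * (B * Zsᵀ)) i i
      = if (i:ℕ) < mrn then ν (i:ℕ) else 0 := by
    intro i
    by_cases h : (i:ℕ) < mrn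
    · have hin : (i:ℕ) < n := hidx i h
      rw [if_pos h]
      have hν' : ν (i:ℕ) = μ ⟨(i:ℕ), hin⟩ := by rw [hν]; simp [hin]
      rw [hν']
      simp only [Matrix.mul_apply, Matrix.transpose_apply, hZs, Matrix.of_apply, dif_pos h]
      have hstep : ∀ m' : Fin n,
          U m' ⟨(i:ℕ), hin⟩ * (∑ l, B m' l * U l ⟨(i:ℕ), hin⟩)
            = μ ⟨(i:ℕ), hin⟩ * (U m' ⟨(i:ℕ), hin⟩ * U m' ⟨(i:ℕ), hin⟩) := by
        intro m'
        rw [hBUentry m' ⟨(i:ℕ), hin⟩]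
        ring
      rw [Finset.sum_congr rfl fun m' _ => hstep m', ← Finset.mul_sum,
        hUcol ⟨(i:ℕ), hin⟩ ⟨(i:ℕ), hin⟩, if_pos rfl, mul_one]
    · rw [if_neg h]
      simp only [Matrix.mul_apply, hZs, Matrix.of_apply, dif_neg h]
      simp
  have htraceZ : (B * Ps).trace = msum := by
    have h1 : B * Ps = (B * Zsᵀ) * Zs := by rw [hPs, ← Matrix.mul_assoc]
    rw [h1, Matrix.trace_mul_comm]
    have h2 : (Zs * (B * Zsᵀ)).trace
        = ∑ i : Fin r, (if (i:ℕ) < mrn then ν (i:ℕ) else 0) := by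
      rw [Matrix.trace]
      exact Finset.sum_congr rfl fun i _ => hdiagval i
    rw [h2]
    have h3 : ∑ i : Fin r, (if (i:ℕ) < mrn then ν (i:ℕ) else 0)
        = ∑ j ∈ Finset.range r, (if j < mrn then ν j else 0) :=
      Fin.sum_univ_eq_sum_range (fun j => if j < mrn then ν j else 0) r
    have h4 : msum = ∑ j ∈ Finset.range n, (if j < mrn then ν j else 0) := by
      rw [hmsum, Finset.sum_filter]
      have h5 : ∀ i : Fin n, (if (i:ℕ) < mrn then μ i else 0)
          = (if (i:ℕ) < mrn then ν (i:ℕ) else 0) := by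
        intro i
        by_cases h : (i:ℕ) < mrn
        · rw [if_pos h, if_pos h, hν]; simp [i.2]
        · rw [if_neg h, if_neg h]
      rw [Finset.sum_congr rfl fun i _ => h5 i]
      exact Fin.sum_univ_eq_sum_range (fun j => if j < mrn then ν j else 0) n
    rw [h3, h4, hgen r hmrn_r, hgen n hmrn_n]
  -- upper bound via the special embedding
  have hub : (1-lam) * Jmse r Y Zs - lam * Jmse r S Zs ≤ c + (n:ℝ)⁻¹ * msum := by
    have hyUB : Jmse r Y Zs ≤ (n:ℝ)⁻¹ * (fro Yt - fro (Yt * Ps)) := by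
      have h6 := jmse_le hn Y Zs (Yt * Zsᵀ)
      rw [hZ1, Matrix.mul_assoc Yt Zsᵀ Zs, ← hPs, ← hYt, fro_proj_pythag Yt Ps hPssym hPsP]
        at h6
      exact h6
    have hsLB : (n:ℝ)⁻¹ * (fro St - fro (St * Ps)) ≤ Jmse r S Zs := by
      have h6 := jmse_ge hn S Zs Ps hPssym hPsP hZDPs
      rwa [← hSt] at h6
    have c1 : (1-lam) * Jmse r Y Zs ≤ (1-lam) * ((n:ℝ)⁻¹ * (fro Yt - fro (Yt * Ps))) :=
      mul_le_mul_of_nonneg_left hyUB (by linarith)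
    have c2 : lam * ((n:ℝ)⁻¹ * (fro St - fro (St * Ps))) ≤ lam * Jmse r S Zs :=
      mul_le_mul_of_nonneg_left hsLB hlam0
    have c3 := hobj Ps hPssym hPsP
    rw [htraceZ] at c3
    linarith
  have hbdd : BddBelow (Set.range fun Z : Matrix (Fin r) (Fin n) ℝ =>
      (1-lam) * Jmse r Y Z - lam * Jmse r S Z) := by
    refine ⟨c + (n:ℝ)⁻¹ * msum, ?_⟩
    rintro x ⟨Z, rfl⟩
    exact hlb Z
  apply le_antisymm
  · exact (ciInf_le hbdd Zs).trans hub
  · exact le_ciInf hlb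

end MainValue

theorem optimal_embedding_dimensionality {n p q : ℕ} (hn : 0 < n)
    (Y : Matrix (Fin p) (Fin n) ℝ) (S : Matrix (Fin q) (Fin n) ℝ)
    (lam : ℝ) (hlam0 : 0 ≤ lam) (hlam1 : lam ≤ 1)
    (Yt : Matrix (Fin p) (Fin n) ℝ) (St : Matrix (Fin q) (Fin n) ℝ)
    (hYt : Yt = Y * (1 - (n : ℝ)⁻¹ • Matrix.of (fun _ _ => (1 : ℝ))))
    (hSt : St = S * (1 - (n : ℝ)⁻¹ • Matrix.of (fun _ _ => (1 : ℝ))))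
    (B : Matrix (Fin n) (Fin n) ℝ)
    (hB : B = lam • (Stᵀ * St) - (1 - lam) • (Ytᵀ * Yt))
    (μ : Fin n → ℝ) (hμ : Monotone μ)
    (U : Matrix (Fin n) (Fin n) ℝ) (hU : Uᵀ * U = 1)
    (hdiag : B = U * Matrix.diagonal μ * Uᵀ)
    (nneg : ℕ) (hnneg : nneg = (Finset.univ.filter fun i : Fin n => μ i < 0).card) :
    (∀ r : ℕ, nneg ≤ r → arlOpt Y S lam r = arlOpt Y S lam nneg) ∧
    (∀ r : ℕ, 1 ≤ r → r < nneg → arlOpt Y S lam nneg < arlOpt Y S lam r) := by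
  have hYt' : Yt = Y * Dm n := hYt
  have hSt' : St = S * Dm n := hSt
  have hval := arl_value hn Y S lam hlam0 hlam1 Yt St hYt' hSt' B hB μ hμ U hU hdiag nneg hnneg
  have hchar : ∀ i : Fin n, μ i < 0 ↔ (i : ℕ) < nneg := mu_char μ hμ nneg hnneg
  have hnn : nneg ≤ n := nneg_le_n μ nneg hnneg
  have hninv : (0:ℝ) < (n:ℝ)⁻¹ := by positivity
  constructor
  · intro r hr
    rw [hval r, hval nneg, min_eq_right hr, min_self]
  · intro r hr1 hr2
    rw [hval r, hval nneg, min_eq_left hr2.le, min_self]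
    have hrn : r < n := lt_of_lt_of_le hr2 hnn
    have hsum : ∑ i ∈ Finset.univ.filter (fun i : Fin n => (i:ℕ) < nneg), μ i
        < ∑ i ∈ Finset.univ.filter (fun i : Fin n => (i:ℕ) < r), μ i := by
      have hsub : (Finset.univ.filter fun i : Fin n => (i:ℕ) < r)
          ⊆ (Finset.univ.filter fun i : Fin n => (i:ℕ) < nneg) := by
        intro i hi
        simp only [Finset.mem_filter, Finset.mem_univ, true_and] at hi ⊢
        omega
      have hmem : (⟨r, hrn⟩ : Fin n) ∈ (Finset.univ.filter fun i : Fin n => (i:ℕ) < nneg) := by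
        simp [hr2]
      have hnmem : (⟨r, hrn⟩ : Fin n) ∉ (Finset.univ.filter fun i : Fin n => (i:ℕ) < r) := by
        simp
      have hneg : ∀ j ∈ (Finset.univ.filter fun i : Fin n => (i:ℕ) < nneg),
          j ∉ (Finset.univ.filter fun i : Fin n => (i:ℕ) < r) → 0 ≤ -μ j := by
        intro j hj _
        simp only [Finset.mem_filter, Finset.mem_univ, true_and] at hj
        have := (hchar j).2 hj
        linarith
      have hpos : 0 < -μ ⟨r, hrn⟩ := by
        have := (hchar ⟨r, hrn⟩).2 (by simpa using hr2)
        linarith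
      have h := Finset.sum_lt_sum_of_subset hsub hmem hnmem hpos hneg
      simp only [Finset.sum_neg_distrib] at h
      linarith
    have := mul_lt_mul_of_pos_left hsum hninv
    linarith
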